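/- Let 1 ≤ l ≤ n be integers and r ∈ ℚ[x_1,...,x_l] a polynomial such that the monomial x_1···x_l divides r. Let R̃_n and R̃_{n+1} be the polynomials with V_n · R̃_n = ũ_n in ℚ[x_1,...,x_n] and V_{n+1} · R̃_{n+1} = ũ_{n+1} in ℚ[x_1,...,x_{n+1}] (both constructed from the same r). Then R̃_{n+1}(x_1,...,x_n,0) = (n+1−l) · R̃_n(x_1,...,x_n). -/

import Mathlib

open MvPolynomial Finset

/-- The Vandermonde polynomial `V = ∏_{1 ≤ i < j ≤ n} (x_i - x_j)`. -/
noncomputable def vand (n : ℕ) : MvPolynomial (Fin n) ℚ :=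
  ∏ p ∈ Finset.univ.filter (fun p : Fin n × Fin n => p.1 < p.2), (X p.1 - X p.2)

/-- `∏_{1 ≤ i ≤ l, i < j ≤ n} (x_i + x_j)`. -/
noncomputable def prodPlus (n l : ℕ) : MvPolynomial (Fin n) ℚ :=
  ∏ p ∈ Finset.univ.filter (fun p : Fin n × Fin n => (p.1 : ℕ) < l ∧ p.1 < p.2),
    (X p.1 + X p.2)

/-- `∏_{l < i < j ≤ n} (x_i - x_j)`. -/
noncomputable def prodMinus (n l : ℕ) : MvPolynomial (Fin n) ℚ :=
  ∏ p ∈ Finset.univ.filter (fun p : Fin n × Fin n => l ≤ (p.1 : ℕ) ∧ p.1 < p.2),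
    (X p.1 - X p.2)

/-- The signed symmetrization `∑_{ω ∈ S(n)} sgn(ω) · f(x_{ω(1)}, …, x_{ω(n)})`. -/
noncomputable def antiSum (n : ℕ) (f : MvPolynomial (Fin n) ℚ) : MvPolynomial (Fin n) ℚ :=
  ∑ ω : Equiv.Perm (Fin n), ((Equiv.Perm.sign ω : ℤ) : ℚ) • rename (⇑ω) f

section helpers

variable {A : Type*} [CommRing A]

lemma prod_pairs {m : ℕ} (cond : Fin m × Fin m → Prop) [DecidablePred cond]
    (f : Fin m × Fin m → A) :
    ∏ p ∈ univ.filter cond, f p = ∏ i : Fin m, ∏ j : Fin m, if cond (i, j) then f (i, j) else 1 := by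
  rw [Finset.prod_filter, ← Finset.univ_product_univ, Finset.prod_product]

lemma prod_single_swap {m : ℕ} (f g : Fin m → A) (z : Fin m) (c d : A)
    (hz : f z * c = g z * d) (h : ∀ j, j ≠ z → f j = g j) :
    (∏ j, f j) * c = (∏ j, g j) * d := by
  rw [← Finset.prod_erase_mul univ f (mem_univ z), ← Finset.prod_erase_mul univ g (mem_univ z),
    Finset.prod_congr rfl (fun j hj => h j (Finset.ne_of_mem_erase hj)), mul_assoc, mul_assoc, hz]

end helpers

section evalforms

variable {n l : ℕ}

lemma aeval_prodMinus_eq {m : ℕ} (g : Fin m → MvPolynomial (Fin n) ℚ) :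
    aeval g (prodMinus m l) =
      ∏ i : Fin m, ∏ j : Fin m, if l ≤ (i : ℕ) ∧ i < j then g i - g j else 1 := by
  rw [prodMinus, map_prod, ← prod_pairs (fun p : Fin m × Fin m => l ≤ (p.1 : ℕ) ∧ p.1 < p.2)
    (fun p => g p.1 - g p.2)]
  exact Finset.prod_congr rfl (fun p _ => by simp)

lemma aeval_prodPlus_eq {m : ℕ} (g : Fin m → MvPolynomial (Fin n) ℚ) :
    aeval g (prodPlus m l) =
      ∏ i : Fin m, ∏ j : Fin m, if (i : ℕ) < l ∧ i < j then g i + g j else 1 := by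
  rw [prodPlus, map_prod, ← prod_pairs (fun p : Fin m × Fin m => (p.1 : ℕ) < l ∧ p.1 < p.2)
    (fun p => g p.1 + g p.2)]
  exact Finset.prod_congr rfl (fun p _ => by simp)

lemma vand_eq_prodMinus (m : ℕ) : vand m = prodMinus m 0 := by
  rw [vand, prodMinus]
  exact Finset.prod_congr (by simp) (fun _ _ => rfl)

lemma rename_eq_aeval_comp (σ : Equiv.Perm (Fin n)) (p : MvPolynomial (Fin n) ℚ) :
    rename (⇑σ) p = aeval (fun i => X (σ i)) p := by
  have := aeval_rename (⇑σ) (X : Fin n → MvPolynomial (Fin n) ℚ) p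
  rw [aeval_X_left_apply] at this
  exact this

end evalforms

section caseA

variable {n l : ℕ}

lemma A_minus (σ : Equiv.Perm (Fin n)) :
    aeval (Fin.snoc (fun i => X (σ i)) (0 : MvPolynomial (Fin n) ℚ)) (prodMinus (n + 1) l) =
      (∏ i ∈ univ.filter (fun i : Fin n => l ≤ (i : ℕ)), X (σ i)) *
        aeval (fun i => X (σ i)) (prodMinus n l) := by
  set Y : Fin n → MvPolynomial (Fin n) ℚ := fun i => X (σ i) with hY
  rw [aeval_prodMinus_eq, Fin.prod_univ_castSucc]
  have hlast : (∏ j : Fin (n + 1), if l ≤ ((Fin.last n : Fin (n + 1)) : ℕ) ∧ Fin.last n < j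
      then (Fin.snoc Y 0 : Fin (n+1) → MvPolynomial (Fin n) ℚ) (Fin.last n) - (Fin.snoc Y 0 : Fin (n+1) → MvPolynomial (Fin n) ℚ) j else (1 : MvPolynomial (Fin n) ℚ)) = 1 := by
    apply Finset.prod_eq_one; intro j _
    rw [if_neg]; rintro ⟨-, hj⟩; exact absurd hj (not_lt.mpr (Fin.le_last j))
  rw [hlast, mul_one]
  have hrow : ∀ i : Fin n, (∏ j : Fin (n + 1),
      if l ≤ ((i.castSucc : Fin (n + 1)) : ℕ) ∧ i.castSucc < j
        then (Fin.snoc Y 0 : Fin (n+1) → MvPolynomial (Fin n) ℚ) i.castSucc - (Fin.snoc Y 0 : Fin (n+1) → MvPolynomial (Fin n) ℚ) j else 1)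
      = (∏ j : Fin n, if l ≤ (i : ℕ) ∧ i < j then Y i - Y j else 1) *
          (if l ≤ (i : ℕ) then Y i else 1) := by
    intro i
    rw [Fin.prod_univ_castSucc]
    congr 1
    · exact Finset.prod_congr rfl fun j _ => by
        simp [Fin.snoc_castSucc, Fin.castSucc_lt_castSucc_iff]
    · simp [Fin.snoc_castSucc, Fin.snoc_last, Fin.castSucc_lt_last, sub_zero]
  rw [Finset.prod_congr rfl (fun i _ => hrow i), Finset.prod_mul_distrib,
    aeval_prodMinus_eq, Finset.prod_filter, mul_comm]

lemma A_plus (hln : l ≤ n) (σ : Equiv.Perm (Fin n)) :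
    aeval (Fin.snoc (fun i => X (σ i)) (0 : MvPolynomial (Fin n) ℚ)) (prodPlus (n + 1) l) =
      (∏ i ∈ univ.filter (fun i : Fin n => (i : ℕ) < l), X (σ i)) *
        aeval (fun i => X (σ i)) (prodPlus n l) := by
  set Y : Fin n → MvPolynomial (Fin n) ℚ := fun i => X (σ i) with hY
  rw [aeval_prodPlus_eq, Fin.prod_univ_castSucc]
  have hlast : (∏ j : Fin (n + 1), if ((Fin.last n : Fin (n + 1)) : ℕ) < l ∧ Fin.last n < j
      then (Fin.snoc Y 0 : Fin (n+1) → MvPolynomial (Fin n) ℚ) (Fin.last n) + (Fin.snoc Y 0 : Fin (n+1) → MvPolynomial (Fin n) ℚ) j else (1 : MvPolynomial (Fin n) ℚ)) = 1 := by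
    apply Finset.prod_eq_one; intro j _
    rw [if_neg]; rintro ⟨hj, -⟩; simp [Fin.val_last] at hj; omega
  rw [hlast, mul_one]
  have hrow : ∀ i : Fin n, (∏ j : Fin (n + 1),
      if ((i.castSucc : Fin (n + 1)) : ℕ) < l ∧ i.castSucc < j
        then (Fin.snoc Y 0 : Fin (n+1) → MvPolynomial (Fin n) ℚ) i.castSucc + (Fin.snoc Y 0 : Fin (n+1) → MvPolynomial (Fin n) ℚ) j else 1)
      = (∏ j : Fin n, if (i : ℕ) < l ∧ i < j then Y i + Y j else 1) *
          (if (i : ℕ) < l then Y i else 1) := by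
    intro i
    rw [Fin.prod_univ_castSucc]
    congr 1
    · exact Finset.prod_congr rfl fun j _ => by
        simp [Fin.snoc_castSucc, Fin.castSucc_lt_castSucc_iff]
    · simp [Fin.snoc_castSucc, Fin.snoc_last, Fin.castSucc_lt_last, add_zero]
  rw [Finset.prod_congr rfl (fun i _ => hrow i), Finset.prod_mul_distrib,
    aeval_prodPlus_eq, Finset.prod_filter, mul_comm]

lemma A_r (hln : l ≤ n) (σ : Equiv.Perm (Fin n)) (r : MvPolynomial (Fin l) ℚ) :
    aeval (Fin.snoc (fun i => X (σ i)) (0 : MvPolynomial (Fin n) ℚ))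
        (rename (Fin.castLE (hln.trans (Nat.le_succ n))) r) =
      aeval (fun i => X (σ i)) (rename (Fin.castLE hln) r) := by
  rw [aeval_rename, aeval_rename]
  have hfun : (Fin.snoc (fun i => X (σ i)) (0 : MvPolynomial (Fin n) ℚ) ∘
      Fin.castLE (hln.trans (Nat.le_succ n))) = ((fun i => X (σ i)) ∘ Fin.castLE hln) := by
    funext i
    have h : (Fin.castLE (hln.trans (Nat.le_succ n)) i : Fin (n + 1)) =
        Fin.castSucc (Fin.castLE hln i) := by ext; simp
    simp only [Function.comp_apply, h, Fin.snoc_castSucc]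
  rw [hfun]

end caseA

section caseB

variable {n l : ℕ}

/-- the substitution when the zero lands in slot `castSucc z` and `x_{σ z}` lands in slot `last` -/
noncomputable def gB (σ : Equiv.Perm (Fin n)) (z : Fin n) : Fin (n + 1) → MvPolynomial (Fin n) ℚ :=
  fun i => if i = Fin.castSucc z then 0 else
    (Fin.snoc (fun j => X (σ j)) (X (σ z)) : Fin (n + 1) → MvPolynomial (Fin n) ℚ) i

lemma gB_castSucc (σ : Equiv.Perm (Fin n)) (z : Fin n) (j : Fin n) :
    gB σ z (Fin.castSucc j) = if j = z then 0 else X (σ j) := by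
  rcases eq_or_ne j z with h | h
  · simp [gB, h]
  · simp [gB, h, Fin.castSucc_inj.ne.mpr h, Fin.snoc_castSucc]

lemma gB_last (σ : Equiv.Perm (Fin n)) (z : Fin n) :
    gB σ z (Fin.last n) = X (σ z) := by
  rw [gB, if_neg (Fin.castSucc_lt_last z).ne', Fin.snoc_last]

lemma B_plus (σ : Equiv.Perm (Fin n)) (z : Fin n) (hz : l ≤ (z : ℕ)) :
    aeval (gB σ z) (prodPlus (n + 1) l) =
      (∏ i ∈ univ.filter (fun i : Fin n => (i : ℕ) < l), X (σ i)) *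
        aeval (fun i => X (σ i)) (prodPlus n l) := by
  set Y : Fin n → MvPolynomial (Fin n) ℚ := fun i => X (σ i) with hY
  rw [aeval_prodPlus_eq, Fin.prod_univ_castSucc]
  have hlast : (∏ j : Fin (n + 1), if ((Fin.last n : Fin (n + 1)) : ℕ) < l ∧ Fin.last n < j
      then gB σ z (Fin.last n) + gB σ z j else (1 : MvPolynomial (Fin n) ℚ)) = 1 := by
    apply Finset.prod_eq_one; intro j _
    rw [if_neg]; rintro ⟨hj, -⟩
    have := z.isLt; simp [Fin.val_last] at hj; omega
  rw [hlast, mul_one]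
  have hrow : ∀ i : Fin n, (∏ j : Fin (n + 1),
      if ((i.castSucc : Fin (n + 1)) : ℕ) < l ∧ i.castSucc < j
        then gB σ z i.castSucc + gB σ z j else 1)
      = (∏ j : Fin n, if (i : ℕ) < l ∧ i < j then Y i + Y j else 1) *
          (if (i : ℕ) < l then Y i else 1) := by
    intro i
    rw [Fin.prod_univ_castSucc]
    simp only [gB_castSucc, gB_last, Fin.coe_castSucc, Fin.castSucc_lt_castSucc_iff,
      Fin.castSucc_lt_last, and_true]
    by_cases hi : (i : ℕ) < l
    · have hiz : i ≠ z := fun h => by rw [h] at hi; omega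
      have hiltz : i < z := by rw [Fin.lt_def]; omega
      rw [if_neg hiz, if_pos hi, if_pos hi]
      apply prod_single_swap _ _ z
      · split_ifs with h1 h2
        · ring
        · exact absurd rfl h2
        · exact absurd ⟨hi, hiltz⟩ h1
      · intro j hj
        rcases Classical.em ((i : ℕ) < l ∧ i < j) with h | h
        · rw [if_pos h, if_pos h, if_neg hj]
        · rw [if_neg h, if_neg h]
    · rw [if_neg hi, if_neg hi, mul_one, mul_one]
      rw [Finset.prod_eq_one (fun j _ => if_neg (fun h => hi h.1)),
        Finset.prod_eq_one (fun j _ => if_neg (fun h => hi h.1))]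
  rw [Finset.prod_congr rfl (fun i _ => hrow i), Finset.prod_mul_distrib,
    aeval_prodPlus_eq, Finset.prod_filter, mul_comm]

end caseB

section caseBminus

variable {n l : ℕ}

noncomputable def CC (σ : Equiv.Perm (Fin n)) (z : Fin n) (l : ℕ) : Fin n → MvPolynomial (Fin n) ℚ :=
  fun i => if i = z then 1 else if l ≤ (i : ℕ) then
    (if (i : ℕ) < (z : ℕ) then X (σ i) else X (σ i) - X (σ z)) else 1

lemma Bm_key (σ : Equiv.Perm (Fin n)) (z : Fin n) (hz : l ≤ (z : ℕ)) :
    ((∏ j : Fin n, if l ≤ (z : ℕ) ∧ z < j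
        then (if z = z then 0 else X (σ z)) - (if j = z then 0 else X (σ j)) else 1) *
      (if l ≤ (z : ℕ) then (if z = z then 0 else X (σ z)) - X (σ z) else 1)) *
      (∏ i : Fin n, CC σ z l i)
    = -((∏ i ∈ univ.filter (fun i : Fin n => l ≤ (i : ℕ)), X (σ i)) *
        (∏ j : Fin n, if l ≤ (z : ℕ) ∧ z < j then X (σ z) - X (σ j) else 1)) := by
  simp only [eq_self_iff_true, if_true, if_pos hz, zero_sub]
  rw [Finset.prod_filter]
  have h1 : ∀ j ∈ univ.erase z,
      (if l ≤ (z : ℕ) ∧ z < j then -(if j = z then 0 else X (σ j)) else 1) * CC σ z l j =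
      (if l ≤ (j : ℕ) then X (σ j) else 1) *
        (if l ≤ (z : ℕ) ∧ z < j then X (σ z) - X (σ j) else 1) := by
    intro j hj
    have hjz : j ≠ z := Finset.ne_of_mem_erase hj
    have hne : (j : ℕ) ≠ (z : ℕ) := fun h => hjz (Fin.val_injective h)
    simp only [CC, if_neg hjz, Fin.lt_def]
    split_ifs
    all_goals try ring
    all_goals (exfalso; omega)
  have hL : ∏ j : Fin n,
      ((if l ≤ (z : ℕ) ∧ z < j then -(if j = z then 0 else X (σ j)) else 1) * CC σ z l j) =
      ∏ j ∈ univ.erase z, ((if l ≤ (j : ℕ) then X (σ j) else 1) *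
        (if l ≤ (z : ℕ) ∧ z < j then X (σ z) - X (σ j) else 1)) := by
    rw [← Finset.mul_prod_erase univ _ (mem_univ z)]
    have hfz : (if l ≤ (z : ℕ) ∧ z < z then -(if z = z then 0 else X (σ z)) else 1) *
        CC σ z l z = 1 := by
      simp [CC, lt_irrefl]
    beta_reduce
    rw [hfz, one_mul]
    exact Finset.prod_congr rfl h1
  have hL2 : (∏ j : Fin n, if l ≤ (z : ℕ) ∧ z < j then -(if j = z then 0 else X (σ j)) else 1) *
      (∏ i : Fin n, CC σ z l i) =
      ∏ j ∈ univ.erase z, ((if l ≤ (j : ℕ) then X (σ j) else 1) *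
        (if l ≤ (z : ℕ) ∧ z < j then X (σ z) - X (σ j) else 1)) := by
    rw [← Finset.prod_mul_distrib]; exact hL
  have hR : (∏ j : Fin n, if l ≤ (j : ℕ) then X (σ j) else 1) *
      (∏ j : Fin n, if l ≤ (z : ℕ) ∧ z < j then X (σ z) - X (σ j) else 1) =
      X (σ z) * (∏ j ∈ univ.erase z, ((if l ≤ (j : ℕ) then X (σ j) else 1) *
        (if l ≤ (z : ℕ) ∧ z < j then X (σ z) - X (σ j) else 1)) : MvPolynomial (Fin n) ℚ) := by
    rw [← Finset.prod_mul_distrib, ← Finset.mul_prod_erase univ _ (mem_univ z)]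
    beta_reduce
    congr 1
    simp [hz, lt_irrefl]
  linear_combination (-(X (σ z))) * hL2 + hR

end caseBminus

section caseBminus2

variable {n l : ℕ}

lemma Bm_row (σ : Equiv.Perm (Fin n)) (z : Fin n) (i : Fin n) (hiz : i ≠ z) :
    (∏ j : Fin n, if l ≤ (i : ℕ) ∧ i < j
        then (if i = z then 0 else X (σ i)) - (if j = z then 0 else X (σ j)) else 1) *
      (if l ≤ (i : ℕ) then (if i = z then 0 else X (σ i)) - X (σ z) else 1)
    = (∏ j : Fin n, if l ≤ (i : ℕ) ∧ i < j then X (σ i) - X (σ j) else 1) * CC σ z l i := by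
  simp only [CC, if_neg hiz]
  have hne : (i : ℕ) ≠ (z : ℕ) := fun h => hiz (Fin.val_injective h)
  by_cases hi : l ≤ (i : ℕ)
  · rw [if_pos hi, if_pos hi]
    rcases lt_or_gt_of_ne hne with hlt | hgt
    · rw [if_pos hlt]
      have hiltz : i < z := by rw [Fin.lt_def]; omega
      apply prod_single_swap _ _ z
      · split_ifs with h1 h2
        · ring
        · exact absurd rfl h2
        · exact absurd ⟨hi, hiltz⟩ h1
      · intro j hj
        rcases Classical.em (l ≤ (i : ℕ) ∧ i < j) with h | h
        · rw [if_pos h, if_pos h, if_neg hj]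
        · rw [if_neg h, if_neg h]
    · rw [if_neg (by omega : ¬ (i : ℕ) < (z : ℕ))]
      congr 1
      apply Finset.prod_congr rfl
      intro j _
      rcases Classical.em (l ≤ (i : ℕ) ∧ i < j) with h | h
      · have hjz : j ≠ z := by
          rintro rfl
          have := h.2
          rw [Fin.lt_def] at this
          omega
        rw [if_pos h, if_pos h, if_neg hjz]
      · rw [if_neg h, if_neg h]
  · rw [if_neg hi, if_neg hi, mul_one, mul_one,
      Finset.prod_eq_one (fun j _ => if_neg (fun h => hi h.1)),
      Finset.prod_eq_one (fun j _ => if_neg (fun h => hi h.1))]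

lemma B_minus (σ : Equiv.Perm (Fin n)) (z : Fin n) (hz : l ≤ (z : ℕ)) :
    aeval (gB σ z) (prodMinus (n + 1) l) =
      -((∏ i ∈ univ.filter (fun i : Fin n => l ≤ (i : ℕ)), X (σ i)) *
        aeval (fun i => X (σ i)) (prodMinus n l)) := by
  rw [aeval_prodMinus_eq, Fin.prod_univ_castSucc]
  have hlast : (∏ j : Fin (n + 1), if l ≤ ((Fin.last n : Fin (n + 1)) : ℕ) ∧ Fin.last n < j
      then gB σ z (Fin.last n) - gB σ z j else (1 : MvPolynomial (Fin n) ℚ)) = 1 := by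
    apply Finset.prod_eq_one; intro j _
    rw [if_neg]; rintro ⟨-, hj⟩; exact absurd hj (not_lt.mpr (Fin.le_last j))
  rw [hlast, mul_one]
  have hrow : ∀ i : Fin n, (∏ j : Fin (n + 1),
      if l ≤ ((i.castSucc : Fin (n + 1)) : ℕ) ∧ i.castSucc < j
        then gB σ z i.castSucc - gB σ z j else 1)
      = (∏ j : Fin n, if l ≤ (i : ℕ) ∧ i < j
            then (if i = z then (0 : MvPolynomial (Fin n) ℚ) else X (σ i)) -
              (if j = z then 0 else X (σ j)) else 1) *
          (if l ≤ (i : ℕ) then (if i = z then 0 else X (σ i)) - X (σ z) else 1) := by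
    intro i
    rw [Fin.prod_univ_castSucc]
    simp only [gB_castSucc, gB_last, Fin.coe_castSucc, Fin.castSucc_lt_castSucc_iff,
      Fin.castSucc_lt_last, and_true]
  rw [Finset.prod_congr rfl (fun i _ => hrow i), aeval_prodMinus_eq]
  have hsplitL : (∏ i : Fin n, ((∏ j : Fin n, if l ≤ (i : ℕ) ∧ i < j
        then (if i = z then 0 else X (σ i)) - (if j = z then 0 else X (σ j)) else 1) *
          (if l ≤ (i : ℕ) then (if i = z then 0 else X (σ i)) - X (σ z) else 1)))
      = ((∏ j : Fin n, if l ≤ (z : ℕ) ∧ z < j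
            then (if z = z then 0 else X (σ z)) - (if j = z then 0 else X (σ j)) else 1) *
          (if l ≤ (z : ℕ) then (if z = z then 0 else X (σ z)) - X (σ z) else 1)) *
        ((∏ i ∈ univ.erase z, ∏ j : Fin n,
            if l ≤ (i : ℕ) ∧ i < j then (X (σ i) : MvPolynomial (Fin n) ℚ) - X (σ j) else 1) *
          ∏ i : Fin n, CC σ z l i) := by
    rw [← Finset.mul_prod_erase univ _ (mem_univ z),
      Finset.prod_congr rfl (fun i hi => Bm_row σ z i (Finset.ne_of_mem_erase hi)),
      Finset.prod_mul_distrib,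
      Finset.prod_erase univ (show CC σ z l z = 1 by simp [CC])]
  have hsplitR : (∏ i : Fin n, ∏ j : Fin n,
        if l ≤ (i : ℕ) ∧ i < j then X (σ i) - X (σ j) else 1)
      = (∏ j : Fin n, if l ≤ (z : ℕ) ∧ z < j then X (σ z) - X (σ j) else 1) *
        ∏ i ∈ univ.erase z, ∏ j : Fin n,
          if l ≤ (i : ℕ) ∧ i < j then (X (σ i) : MvPolynomial (Fin n) ℚ) - X (σ j) else 1 := by
    rw [← Finset.mul_prod_erase univ _ (mem_univ z)]
  rw [hsplitL, hsplitR]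
  have hK := Bm_key σ z hz
  linear_combination (∏ i ∈ univ.erase z, ∏ j : Fin n,
    if l ≤ (i : ℕ) ∧ i < j then (X (σ i) : MvPolynomial (Fin n) ℚ) - X (σ j) else 1) * hK

end caseBminus2

section perms

variable {n l : ℕ}

noncomputable def liftedP (σ : Equiv.Perm (Fin n)) : Equiv.Perm (Fin (n + 1)) :=
  σ.viaFintypeEmbedding Fin.castSuccEmb

lemma liftedP_castSucc (σ : Equiv.Perm (Fin n)) (i : Fin n) :
    liftedP σ (Fin.castSucc i) = Fin.castSucc (σ i) :=
  Equiv.Perm.viaFintypeEmbedding_apply_image σ Fin.castSuccEmb i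

lemma liftedP_last (σ : Equiv.Perm (Fin n)) : liftedP σ (Fin.last n) = Fin.last n := by
  apply Equiv.Perm.viaFintypeEmbedding_apply_notMem_range
  rintro ⟨a, ha⟩
  exact (Fin.castSucc_lt_last a).ne ha

noncomputable def PsiFun : Fin (n + 1) × Equiv.Perm (Fin n) → Equiv.Perm (Fin (n + 1)) :=
  fun p => liftedP p.2 * Equiv.swap p.1 (Fin.last n)

lemma liftedP_inv_last (σ : Equiv.Perm (Fin n)) : (liftedP σ)⁻¹ (Fin.last n) = Fin.last n := by
  conv_lhs => rw [← liftedP_last σ]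
  exact Equiv.symm_apply_apply _ _

lemma Psi_inv_last (k : Fin (n + 1)) (σ : Equiv.Perm (Fin n)) :
    (PsiFun (k, σ))⁻¹ (Fin.last n) = k := by
  rw [PsiFun, mul_inv_rev, Equiv.Perm.mul_apply, liftedP_inv_last]
  simp

lemma Psi_bijective : Function.Bijective (PsiFun (n := n)) := by
  rw [Fintype.bijective_iff_injective_and_card]
  constructor
  · rintro ⟨k, σ⟩ ⟨k', σ'⟩ h
    have hk : k = k' := by
      have := congrArg (fun ω : Equiv.Perm (Fin (n + 1)) => ω⁻¹ (Fin.last n)) h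
      simpa [Psi_inv_last] using this
    subst hk
    have hσ : liftedP σ = liftedP σ' := by
      have := mul_right_cancel h
      exact this
    have : σ = σ' := by
      ext i
      have h2 := congrArg (fun ω : Equiv.Perm (Fin (n + 1)) => ω (Fin.castSucc i)) hσ
      simp only [liftedP_castSucc] at h2
      exact congrArg Fin.val (Fin.castSucc_inj.mp h2)
    rw [this]
  · simp [Fintype.card_perm, Fintype.card_prod, Nat.factorial_succ]

lemma sign_Psi_last (σ : Equiv.Perm (Fin n)) :
    Equiv.Perm.sign (PsiFun (Fin.last n, σ)) = Equiv.Perm.sign σ := by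
  rw [PsiFun]
  simp only [Equiv.swap_self]
  rw [show (Equiv.refl (Fin (n + 1))) = 1 from rfl, mul_one,
    liftedP, Equiv.Perm.viaFintypeEmbedding_sign]

lemma sign_Psi_castSucc (σ : Equiv.Perm (Fin n)) (z : Fin n) :
    Equiv.Perm.sign (PsiFun (Fin.castSucc z, σ)) = -Equiv.Perm.sign σ := by
  rw [PsiFun, map_mul, Equiv.Perm.sign_swap (Fin.castSucc_lt_last z).ne,
    liftedP, Equiv.Perm.viaFintypeEmbedding_sign, mul_neg, mul_one]

lemma comp_A (σ : Equiv.Perm (Fin n)) :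
    (Fin.snoc X (0 : MvPolynomial (Fin n) ℚ)) ∘ (PsiFun (Fin.last n, σ)) =
      Fin.snoc (fun i => X (σ i)) 0 := by
  have h : PsiFun (Fin.last n, σ) = liftedP σ := by
    rw [PsiFun]
    simp only [Equiv.swap_self]
    rw [show (Equiv.refl (Fin (n + 1))) = 1 from rfl, mul_one]
  funext i
  rw [Function.comp_apply, h]
  induction i using Fin.lastCases with
  | last => rw [liftedP_last, Fin.snoc_last, Fin.snoc_last]
  | cast i => rw [liftedP_castSucc, Fin.snoc_castSucc, Fin.snoc_castSucc]

lemma comp_B (σ : Equiv.Perm (Fin n)) (z : Fin n) :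
    (Fin.snoc X (0 : MvPolynomial (Fin n) ℚ)) ∘ (PsiFun (Fin.castSucc z, σ)) = gB σ z := by
  funext i
  rw [Function.comp_apply, PsiFun, Equiv.Perm.mul_apply]
  induction i using Fin.lastCases with
  | last =>
      rw [Equiv.swap_apply_right, liftedP_castSucc, Fin.snoc_castSucc, gB_last]
  | cast i =>
      rcases eq_or_ne i z with rfl | hi
      · rw [Equiv.swap_apply_left, liftedP_last, Fin.snoc_last, gB_castSucc, if_pos rfl]
      · rw [Equiv.swap_apply_of_ne_of_ne (Fin.castSucc_inj.ne.mpr hi) (Fin.castSucc_lt_last i).ne,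
          liftedP_castSucc, Fin.snoc_castSucc, gB_castSucc, if_neg hi]

lemma Psi_apply_fst (k : Fin (n + 1)) (σ : Equiv.Perm (Fin n)) :
    PsiFun (k, σ) k = Fin.last n := by
  rw [PsiFun, Equiv.Perm.mul_apply, Equiv.swap_apply_left, liftedP_last]

lemma C_zero (hln1 : l ≤ n + 1) (r : MvPolynomial (Fin l) ℚ)
    (hdvd : (∏ i : Fin l, X i) ∣ r) (k : Fin (n + 1)) (hk : (k : ℕ) < l)
    (σ : Equiv.Perm (Fin n)) :
    aeval (Fin.snoc X (0 : MvPolynomial (Fin n) ℚ) ∘ PsiFun (k, σ))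
      (rename (Fin.castLE hln1) r) = 0 := by
  obtain ⟨s, rfl⟩ := hdvd
  rw [map_mul, map_mul]
  have hzero : aeval (Fin.snoc X (0 : MvPolynomial (Fin n) ℚ) ∘ PsiFun (k, σ))
      (rename (Fin.castLE hln1) (∏ i : Fin l, X i : MvPolynomial (Fin l) ℚ)) = 0 := by
    rw [show (rename (Fin.castLE hln1)) (∏ i : Fin l, (X i : MvPolynomial (Fin l) ℚ)) =
        ∏ i : Fin l, (X (Fin.castLE hln1 i) : MvPolynomial (Fin (n + 1)) ℚ) from by
      simp [map_prod], map_prod]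
    apply Finset.prod_eq_zero (Finset.mem_univ (⟨(k : ℕ), hk⟩ : Fin l))
    rw [aeval_X, Function.comp_apply]
    have hkk : (Fin.castLE hln1 (⟨(k : ℕ), hk⟩ : Fin l)) = k := by ext; simp
    rw [hkk, Psi_apply_fst, Fin.snoc_last]
  rw [hzero, zero_mul]

lemma B_r (hln : l ≤ n) (σ : Equiv.Perm (Fin n)) (z : Fin n) (hz : l ≤ (z : ℕ))
    (r : MvPolynomial (Fin l) ℚ) :
    aeval (gB σ z) (rename (Fin.castLE (hln.trans (Nat.le_succ n))) r) =
      aeval (fun i => X (σ i)) (rename (Fin.castLE hln) r) := by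
  rw [aeval_rename, aeval_rename]
  have hfun : (gB σ z ∘ Fin.castLE (hln.trans (Nat.le_succ n))) =
      ((fun i => X (σ i)) ∘ Fin.castLE hln) := by
    funext i
    have h : (Fin.castLE (hln.trans (Nat.le_succ n)) i : Fin (n + 1)) =
        Fin.castSucc (Fin.castLE hln i) := by ext; simp
    have hiz : (Fin.castLE hln i) ≠ z := by
      intro hh
      have : (i : ℕ) = (z : ℕ) := congrArg Fin.val hh
      have := i.isLt
      omega
    simp only [Function.comp_apply, h, gB_castSucc, if_neg hiz]
  rw [hfun]

lemma merge_filters (σ : Equiv.Perm (Fin n)) (l : ℕ) :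
    (∏ i ∈ univ.filter (fun i : Fin n => (i : ℕ) < l), X (σ i)) *
      (∏ i ∈ univ.filter (fun i : Fin n => l ≤ (i : ℕ)), X (σ i)) =
      (∏ i : Fin n, X i : MvPolynomial (Fin n) ℚ) := by
  rw [show (univ.filter (fun i : Fin n => l ≤ (i : ℕ))) =
      univ.filter (fun i : Fin n => ¬ (i : ℕ) < l) from by ext i; simp [not_lt],
    Finset.prod_filter_mul_prod_filter_not]
  exact Equiv.prod_comp σ (fun i => X i)

end perms

section final

variable {n l : ℕ}

lemma vand_snoc : aeval (Fin.snoc X (0 : MvPolynomial (Fin n) ℚ)) (vand (n + 1)) =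
    (∏ i : Fin n, X i) * vand n := by
  rw [vand_eq_prodMinus (n + 1), vand_eq_prodMinus n, aeval_prodMinus_eq,
    Fin.prod_univ_castSucc]
  have hlast : (∏ j : Fin (n + 1), if 0 ≤ ((Fin.last n : Fin (n + 1)) : ℕ) ∧ Fin.last n < j
      then (Fin.snoc X 0 : Fin (n + 1) → MvPolynomial (Fin n) ℚ) (Fin.last n) -
        (Fin.snoc X 0 : Fin (n + 1) → MvPolynomial (Fin n) ℚ) j
      else (1 : MvPolynomial (Fin n) ℚ)) = 1 := by
    apply Finset.prod_eq_one; intro j _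
    rw [if_neg]; rintro ⟨-, hj⟩; exact absurd hj (not_lt.mpr (Fin.le_last j))
  rw [hlast, mul_one]
  have hrow : ∀ i : Fin n, (∏ j : Fin (n + 1),
      if 0 ≤ ((i.castSucc : Fin (n + 1)) : ℕ) ∧ i.castSucc < j
        then (Fin.snoc X 0 : Fin (n + 1) → MvPolynomial (Fin n) ℚ) i.castSucc -
          (Fin.snoc X 0 : Fin (n + 1) → MvPolynomial (Fin n) ℚ) j else 1)
      = (∏ j : Fin n, if 0 ≤ (i : ℕ) ∧ i < j then X i - X j else 1) * X i := by
    intro i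
    rw [Fin.prod_univ_castSucc]
    congr 1
    · exact Finset.prod_congr rfl fun j _ => by
        simp [Fin.snoc_castSucc, Fin.castSucc_lt_castSucc_iff]
    · simp [Fin.snoc_castSucc, Fin.snoc_last, Fin.castSucc_lt_last, sub_zero]
  rw [Finset.prod_congr rfl (fun i _ => hrow i), Finset.prod_mul_distrib, mul_comm]
  congr 1
  exact ((aeval_prodMinus_eq (l := 0) X).symm).trans (aeval_X_left_apply _)

lemma eval_A (hln : l ≤ n) (σ : Equiv.Perm (Fin n)) (r : MvPolynomial (Fin l) ℚ) :
    aeval (Fin.snoc (fun i => X (σ i)) (0 : MvPolynomial (Fin n) ℚ))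
      (rename (Fin.castLE (hln.trans (Nat.le_succ n))) r * prodPlus (n + 1) l *
        prodMinus (n + 1) l)
    = (∏ i : Fin n, X i) *
        rename (⇑σ) (rename (Fin.castLE hln) r * prodPlus n l * prodMinus n l) := by
  rw [map_mul, map_mul, A_r hln σ r, A_plus hln σ, A_minus σ,
    rename_eq_aeval_comp, map_mul, map_mul, ← merge_filters σ l]
  ring

lemma eval_B (hln : l ≤ n) (σ : Equiv.Perm (Fin n)) (z : Fin n) (hz : l ≤ (z : ℕ))
    (r : MvPolynomial (Fin l) ℚ) :
    aeval (gB σ z)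
      (rename (Fin.castLE (hln.trans (Nat.le_succ n))) r * prodPlus (n + 1) l *
        prodMinus (n + 1) l)
    = -((∏ i : Fin n, X i) *
        rename (⇑σ) (rename (Fin.castLE hln) r * prodPlus n l * prodMinus n l)) := by
  rw [map_mul, map_mul, B_r hln σ z hz r, B_plus σ z hz, B_minus σ z hz,
    rename_eq_aeval_comp, map_mul, map_mul, ← merge_filters σ l]
  ring

lemma key_sum (hln : l ≤ n) (r : MvPolynomial (Fin l) ℚ)
    (hdvd : (∏ i : Fin l, X i) ∣ r) :
    aeval (Fin.snoc X (0 : MvPolynomial (Fin n) ℚ))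
      (antiSum (n + 1) (rename (Fin.castLE (hln.trans (Nat.le_succ n))) r *
        prodPlus (n + 1) l * prodMinus (n + 1) l)) =
    ((n + 1 - l : ℕ) : ℚ) •
      ((∏ i : Fin n, X i) *
        antiSum n (rename (Fin.castLE hln) r * prodPlus n l * prodMinus n l)) := by
  rw [antiSum, map_sum]
  have hterm : ∀ ω : Equiv.Perm (Fin (n + 1)),
      aeval (Fin.snoc X (0 : MvPolynomial (Fin n) ℚ))
        (((Equiv.Perm.sign ω : ℤ) : ℚ) •
          rename (⇑ω) (rename (Fin.castLE (hln.trans (Nat.le_succ n))) r *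
            prodPlus (n + 1) l * prodMinus (n + 1) l)) =
      ((Equiv.Perm.sign ω : ℤ) : ℚ) •
        aeval (Fin.snoc X (0 : MvPolynomial (Fin n) ℚ) ∘ ⇑ω)
          (rename (Fin.castLE (hln.trans (Nat.le_succ n))) r *
            prodPlus (n + 1) l * prodMinus (n + 1) l) := by
    intro ω
    rw [map_smul, aeval_rename]
  rw [Finset.sum_congr rfl (fun ω _ => hterm ω)]
  rw [← Fintype.sum_bijective PsiFun Psi_bijective
    (fun p : Fin (n + 1) × Equiv.Perm (Fin n) =>
      ((Equiv.Perm.sign (PsiFun p) : ℤ) : ℚ) •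
        aeval (Fin.snoc X (0 : MvPolynomial (Fin n) ℚ) ∘ ⇑(PsiFun p))
          (rename (Fin.castLE (hln.trans (Nat.le_succ n))) r *
            prodPlus (n + 1) l * prodMinus (n + 1) l))
    (fun ω => ((Equiv.Perm.sign ω : ℤ) : ℚ) •
        aeval (Fin.snoc X (0 : MvPolynomial (Fin n) ℚ) ∘ ⇑ω)
          (rename (Fin.castLE (hln.trans (Nat.le_succ n))) r *
            prodPlus (n + 1) l * prodMinus (n + 1) l))
    (fun p => rfl)]
  rw [Fintype.sum_prod_type]
  have hinner : ∀ k : Fin (n + 1),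
      (∑ σ : Equiv.Perm (Fin n), ((Equiv.Perm.sign (PsiFun (k, σ)) : ℤ) : ℚ) •
        aeval (Fin.snoc X (0 : MvPolynomial (Fin n) ℚ) ∘ ⇑(PsiFun (k, σ)))
          (rename (Fin.castLE (hln.trans (Nat.le_succ n))) r *
            prodPlus (n + 1) l * prodMinus (n + 1) l))
      = if (k : ℕ) < l then 0 else
          (∏ i : Fin n, X i) *
            antiSum n (rename (Fin.castLE hln) r * prodPlus n l * prodMinus n l) := by
    intro k
    by_cases hk : (k : ℕ) < l
    · rw [if_pos hk]
      apply Finset.sum_eq_zero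
      intro σ _
      rw [map_mul, map_mul, C_zero (hln.trans (Nat.le_succ n)) r hdvd k hk σ,
        zero_mul, zero_mul, smul_zero]
    · rw [if_neg hk]
      induction k using Fin.lastCases with
      | last =>
          rw [antiSum, Finset.mul_sum]
          apply Finset.sum_congr rfl
          intro σ _
          rw [sign_Psi_last, comp_A σ, eval_A hln σ r, mul_smul_comm]
      | cast z =>
          have hz : l ≤ (z : ℕ) := by simpa [Fin.coe_castSucc, not_lt] using hk
          rw [antiSum, Finset.mul_sum]
          apply Finset.sum_congr rfl
          intro σ _
          rw [sign_Psi_castSucc, comp_B σ z, eval_B hln σ z hz r]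
          simp only [Units.val_neg, Int.cast_neg, neg_smul, smul_neg, neg_neg, mul_smul_comm]
  rw [Finset.sum_congr rfl (fun k _ => hinner k)]
  rw [Fin.sum_univ_eq_sum_range (fun v => if v < l then (0 : MvPolynomial (Fin n) ℚ) else
    (∏ i : Fin n, X i) *
      antiSum n (rename (Fin.castLE hln) r * prodPlus n l * prodMinus n l)) (n + 1)]
  rw [Finset.sum_ite, Finset.sum_const_zero, Finset.sum_const, zero_add]
  have hcard : ((Finset.range (n + 1)).filter (fun v => ¬ v < l)).card = n + 1 - l := by
    rw [show (Finset.range (n + 1)).filter (fun v => ¬ v < l) = Finset.Ico l (n + 1) from by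
      ext v
      simp only [Finset.mem_filter, Finset.mem_range, Finset.mem_Ico, not_lt]
      omega]
    exact Nat.card_Ico l (n + 1)
  rw [hcard, ← Nat.cast_smul_eq_nsmul ℚ]

end final

/-- if `x_1 ⋯ x_l` divides `r`, then
`R̃_{n+1}(x_1, …, x_n, 0) = (n + 1 - l) · R̃_n(x_1, …, x_n)`. -/
theorem quotient_stability_of_monomial_dvd
    (n l : ℕ) (hl : 1 ≤ l) (hln : l ≤ n) (r : MvPolynomial (Fin l) ℚ)
    (hdvd : (∏ i : Fin l, X i) ∣ r)
    (Rn : MvPolynomial (Fin n) ℚ) (Rn1 : MvPolynomial (Fin (n + 1)) ℚ)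
    (hRn : vand n * Rn =
      antiSum n (rename (Fin.castLE hln) r * prodPlus n l * prodMinus n l))
    (hRn1 : vand (n + 1) * Rn1 =
      antiSum (n + 1) (rename (Fin.castLE (hln.trans (Nat.le_succ n))) r *
        prodPlus (n + 1) l * prodMinus (n + 1) l)) :
    aeval (Fin.snoc X (0 : MvPolynomial (Fin n) ℚ)) Rn1 = ((n + 1 - l : ℕ) : ℚ) • Rn := by
  have H := congrArg (aeval (Fin.snoc X (0 : MvPolynomial (Fin n) ℚ))) hRn1
  rw [map_mul, vand_snoc, key_sum hln r hdvd, ← hRn] at H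
  have hne : (∏ i : Fin n, X i) * vand n ≠ 0 := by
    apply mul_ne_zero
    · exact Finset.prod_ne_zero_iff.mpr (fun i _ => X_ne_zero i)
    · rw [vand]
      apply Finset.prod_ne_zero_iff.mpr
      intro p hp
      have hlt : p.1 < p.2 := (Finset.mem_filter.mp hp).2
      exact sub_ne_zero.mpr (fun h => absurd (X_injective h) hlt.ne)
  apply mul_left_cancel₀ hne
  rw [mul_assoc] at H ⊢
  rw [H, mul_smul_comm, ← mul_assoc]
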